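/- Let (W_t) be a symmetric lazy random walk on ℤ (increments in {−1,0,1}, mean zero, symmetric). For constants c₁, c₂ > 0 set t = ⌊c₁ λ² log λ⌋ and suppose i, j ∈ ℤ with |i − j| > c₂ λ log λ. Let W(i,[0,t]) denote the range up to time t of an independent copy started at i, and let Ā denote the 3-neighborhood of a set A. Then for λ large enough, P[ W̄(i,[0,t]) ∩ W̄(j,[0,t]) ≠ ∅ ] ≤ C λ^{−α} with α = c₂²/(18 c₁). -/

import Mathlib

open MeasureTheory ProbabilityTheory



open MeasureTheory ProbabilityTheory Finset Real

variable {Ω : Type} [MeasurableSpace Ω]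

lemma my_exp_le_cosh_add {θ x : ℝ} (hx : |x| ≤ 1) :
    Real.exp (θ * x) ≤ Real.cosh θ + x * Real.sinh θ := by
  rw [abs_le] at hx
  have h := convexOn_exp.2 (Set.mem_univ (-θ)) (Set.mem_univ θ)
    (show (0:ℝ) ≤ (1 - x)/2 by linarith) (show (0:ℝ) ≤ (1 + x)/2 by linarith)
    (show (1 - x)/2 + (1 + x)/2 = 1 by ring)
  simp only [smul_eq_mul] at h
  have key : (1 - x)/2 * (-θ) + (1 + x)/2 * θ = θ * x := by ring
  rw [key] at h
  calc Real.exp (θ * x) ≤ (1 - x)/2 * Real.exp (-θ) + (1 + x)/2 * Real.exp θ := h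
    _ = Real.cosh θ + x * Real.sinh θ := by
        rw [Real.cosh_eq, Real.sinh_eq]; ring

lemma my_iIndepFun_comp_of_injective {Ω : Type} [MeasurableSpace Ω] {μ : Measure Ω}
    {ι κ β : Type*} [mβ : MeasurableSpace β]
    {f : κ → Ω → β} (h : iIndepFun f μ) (u : ι → κ)
    (hu : Function.Injective u) :
    iIndepFun (fun i => f (u i)) μ := by
  classical
  rw [iIndepFun_iff_measure_inter_preimage_eq_mul] at h ⊢
  intro S sets hsets
  have hs' : ∀ k ∈ S.image u, MeasurableSet[mβ]
      (Function.extend u sets (fun _ => Set.univ) k) := by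
    intro k hk
    rcases Finset.mem_image.1 hk with ⟨i, hi, rfl⟩
    rw [hu.extend_apply]
    exact hsets i hi
  have key := h (S.image u) hs'
  have h1 : (⋂ k ∈ S.image u, f k ⁻¹' Function.extend u sets (fun _ => Set.univ) k)
      = ⋂ i ∈ S, (fun i => f (u i)) i ⁻¹' sets i := by
    ext ω
    simp only [Set.mem_iInter, Finset.mem_image]
    constructor
    · intro hω i hi
      have := hω (u i) ⟨i, hi, rfl⟩
      rwa [hu.extend_apply] at this
    · rintro hω k ⟨i, hi, rfl⟩
      rw [hu.extend_apply]
      exact hω i hi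
  have h2 : (∏ k ∈ S.image u, μ (f k ⁻¹' Function.extend u sets (fun _ => Set.univ) k))
      = ∏ i ∈ S, μ ((fun i => f (u i)) i ⁻¹' sets i) := by
    rw [Finset.prod_image (fun a _ b _ hab => hu hab)]
    refine Finset.prod_congr rfl fun i _ => ?_
    rw [hu.extend_apply]
  rw [h1, h2] at key
  exact key

lemma my_onesided (μ : Measure Ω) [IsProbabilityMeasure μ]
    (ξ : ℕ → Ω → ℝ) (hm : ∀ n, Measurable (ξ n))
    (hind : iIndepFun ξ μ)
    (hbd : ∀ n, ∀ᵐ ω ∂μ, |ξ n ω| ≤ 1)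
    (hmean : ∀ n, ∫ ω, ξ n ω ∂μ = 0)
    (u : ℝ) (hu : 0 < u) (n : ℕ) (hn : 0 < n) :
    μ {ω | ∃ s ≤ n, u ≤ ∑ r ∈ Finset.range s, ξ r ω} ≤
      ENNReal.ofReal (Real.exp (-u^2/(2*n))) := by
  classical
  set θ : ℝ := u / n with hθdef
  have hnR : (0:ℝ) < n := by exact_mod_cast hn
  have hθ : 0 < θ := div_pos hu hnR
  set S : ℕ → Ω → ℝ := fun k ω => ∑ r ∈ Finset.range k, ξ r ω with hSdef
  set f : ℕ → Ω → ℝ := fun k ω => Real.exp (θ * S k ω) with hfdef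
  have hSmeas : ∀ k, Measurable (S k) :=
    fun k => Finset.measurable_sum _ fun r _ => hm r
  have hfmeas : ∀ k, Measurable (f k) :=
    fun k => Real.measurable_exp.comp ((hSmeas k).const_mul θ)
  have hfsm : ∀ k, StronglyMeasurable (f k) := fun k => (hfmeas k).stronglyMeasurable
  have hfpos : ∀ k ω, 0 < f k ω := fun k ω => Real.exp_pos _
  -- a.e. bound on S and f
  have hSbd : ∀ k, ∀ᵐ ω ∂μ, |S k ω| ≤ k := by
    intro k
    have := ae_all_iff.2 hbd
    filter_upwards [this] with ω hω
    calc |S k ω| ≤ ∑ r ∈ Finset.range k, |ξ r ω| := Finset.abs_sum_le_sum_abs _ _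
      _ ≤ ∑ _r ∈ Finset.range k, (1:ℝ) := Finset.sum_le_sum fun r _ => hω r
      _ = k := by simp
  have hfbd : ∀ k, ∀ᵐ ω ∂μ, ‖f k ω‖ ≤ Real.exp (θ * k) := by
    intro k
    filter_upwards [hSbd k] with ω hω
    rw [Real.norm_eq_abs, abs_of_pos (hfpos k ω)]
    exact Real.exp_le_exp.2 (mul_le_mul_of_nonneg_left
      ((le_abs_self _).trans hω) hθ.le)
  have hfint : ∀ k, Integrable (f k) μ := fun k =>
    (integrable_const (Real.exp (θ * k))).mono'
      (hfsm k).aestronglyMeasurable (hfbd k)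
  have hξint : ∀ k, Integrable (ξ k) μ := fun k =>
    (integrable_const (1:ℝ)).mono' (hm k).aestronglyMeasurable
      (by filter_upwards [hbd k] with ω hω; rwa [Real.norm_eq_abs])
  -- per-increment exponential moment
  set g : ℕ → Ω → ℝ := fun k ω => Real.exp (θ * ξ k ω) with hgdef
  have hgmeas : ∀ k, Measurable (g k) :=
    fun k => Real.measurable_exp.comp ((hm k).const_mul θ)
  have hgbd : ∀ k, ∀ᵐ ω ∂μ, ‖g k ω‖ ≤ Real.exp θ := by
    intro k
    filter_upwards [hbd k] with ω hω
    rw [Real.norm_eq_abs, abs_of_pos (Real.exp_pos _)]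
    exact Real.exp_le_exp.2 (by nlinarith [abs_le.1 hω] )
  have hgint : ∀ k, Integrable (g k) μ := fun k =>
    (integrable_const (Real.exp θ)).mono'
      (hgmeas k).stronglyMeasurable.aestronglyMeasurable (hgbd k)
  have hgmoment : ∀ k, ∫ ω, g k ω ∂μ ≤ Real.cosh θ := by
    intro k
    have hle : ∀ᵐ ω ∂μ, g k ω ≤ Real.cosh θ + ξ k ω * Real.sinh θ := by
      filter_upwards [hbd k] with ω hω
      exact my_exp_le_cosh_add hω
    have hintr : Integrable (fun ω => Real.cosh θ + ξ k ω * Real.sinh θ) μ :=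
      (integrable_const _).add ((hξint k).mul_const _)
    calc ∫ ω, g k ω ∂μ ≤ ∫ ω, (Real.cosh θ + ξ k ω * Real.sinh θ) ∂μ :=
          integral_mono_ae (hgint k) hintr hle
      _ = Real.cosh θ := by
          rw [integral_add (integrable_const _) ((hξint k).mul_const _),
            integral_const, integral_mul_const, hmean k]
          simp
  have hgmoment1 : ∀ k, 1 ≤ ∫ ω, g k ω ∂μ := by
    intro k
    have hle : ∀ᵐ ω ∂μ, 1 + θ * ξ k ω ≤ g k ω := by
      filter_upwards with ω
      have := Real.add_one_le_exp (θ * ξ k ω)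
      linarith
    have : ∫ ω, (1 + θ * ξ k ω) ∂μ ≤ ∫ ω, g k ω ∂μ :=
      integral_mono_ae ((integrable_const _).add ((hξint k).const_mul _)) (hgint k) hle
    rwa [integral_add (integrable_const _) ((hξint k).const_mul _), integral_const,
      integral_const_mul, hmean k, mul_zero, add_zero, probReal_univ,
      smul_eq_mul, mul_one] at this
  -- f (k+1) = f k * g k
  have hfsucc : ∀ k, f (k + 1) = f k * g k := by
    intro k
    funext ω
    simp only [hfdef, hgdef, hSdef, Pi.mul_apply, Finset.sum_range_succ, mul_add,
      Real.exp_add]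
  -- independence of S k and ξ k
  have hindep_S : ∀ k, IndepFun (f k) (g k) μ := by
    intro k
    have h1 : IndepFun (∑ r ∈ Finset.range k, ξ r) (ξ k) μ :=
      hind.indepFun_finsetSum_of_notMem hm Finset.notMem_range_self
    have h2 : f k = (fun x => Real.exp (θ * x)) ∘ (∑ r ∈ Finset.range k, ξ r) := by
      funext ω; simp [hfdef, hSdef]
    have h3 : g k = (fun x => Real.exp (θ * x)) ∘ (ξ k) := rfl
    rw [h2, h3]
    exact h1.comp (Real.measurable_exp.comp (measurable_id.const_mul θ))
      (Real.measurable_exp.comp (measurable_id.const_mul θ))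
  -- expectation bound
  have hfmoment : ∀ k, ∫ ω, f k ω ∂μ ≤ Real.cosh θ ^ k := by
    intro k
    induction k with
    | zero => simp [hfdef, hSdef]
    | succ k ih =>
      have hmul : ∫ ω, f (k+1) ω ∂μ = (∫ ω, f k ω ∂μ) * ∫ ω, g k ω ∂μ := by
        rw [hfsucc k]
        exact (hindep_S k).integral_mul_eq_mul_integral (hfsm k).aestronglyMeasurable
          (hgmeas k).stronglyMeasurable.aestronglyMeasurable
      rw [hmul, pow_succ]
      have hf0 : 0 ≤ ∫ ω, f k ω ∂μ := integral_nonneg fun ω => (hfpos k ω).le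
      exact mul_le_mul ih (hgmoment k) (le_trans zero_le_one (hgmoment1 k)) (by positivity)
  -- submartingale structure
  set G := Filtration.natural f hfsm with hGdef
  have hadp : StronglyAdapted G f := Filtration.stronglyAdapted_natural hfsm
  -- G k is independent of ξ k
  have hGle : ∀ k, G k ≤ ⨆ j ∈ {j : ℕ | j < k}, MeasurableSpace.comap (ξ j) inferInstance := by
    intro k
    refine iSup₂_le fun j hj => ?_
    refine Measurable.comap_le ?_
    have hξM : ∀ r, r < k → Measurable[⨆ j ∈ {j : ℕ | j < k},
        MeasurableSpace.comap (ξ j) inferInstance] (ξ r) := by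
      intro r hr
      rw [measurable_iff_comap_le]
      exact le_biSup (fun j => MeasurableSpace.comap (ξ j) inferInstance) hr
    have hSM : Measurable[⨆ j ∈ {j : ℕ | j < k},
        MeasurableSpace.comap (ξ j) inferInstance] (S j) :=
      Finset.measurable_sum _ fun r hr => hξM r
        (lt_of_lt_of_le (Finset.mem_range.1 hr) hj)
    exact Real.measurable_exp.comp (hSM.const_mul θ)
  have hindepG : ∀ k, Indep (MeasurableSpace.comap (ξ k) inferInstance) (G k) μ := by
    intro k
    have h1 : Indep (⨆ j ∈ ({k} : Set ℕ), MeasurableSpace.comap (ξ j) inferInstance)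
        (⨆ j ∈ {j : ℕ | j < k}, MeasurableSpace.comap (ξ j) inferInstance) μ :=
      indep_iSup_of_disjoint (fun j => (hm j).comap_le) hind
        (by simp [Set.disjoint_left])
    rw [_root_.iSup_singleton] at h1
    rw [Indep_iff] at h1 ⊢
    exact fun t1 t2 ht1 ht2 => h1 t1 t2 ht1 (hGle k _ ht2)
  have hcondg : ∀ k, μ[g k | G k] =ᵐ[μ] fun _ => ∫ ω, g k ω ∂μ := by
    intro k
    refine condExp_indep_eq ?_ (G.le k) ?_ (hindepG k)
    · exact (hm k).comap_le
    · have : Measurable[MeasurableSpace.comap (ξ k) inferInstance] (ξ k) :=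
        measurable_iff_comap_le.2 le_rfl
      exact (Real.measurable_exp.comp (this.const_mul θ)).stronglyMeasurable
  have hcond : ∀ k, f k ≤ᵐ[μ] μ[f (k + 1) | G k] := by
    intro k
    have hmul : μ[f (k + 1) | G k] =ᵐ[μ] f k * μ[g k | G k] := by
      rw [hfsucc k]
      exact condExp_stronglyMeasurable_mul_of_bound (G.le k) (hadp k) (hgint k)
        (Real.exp (θ * k)) (hfbd k)
    filter_upwards [hmul, hcondg k] with ω hω h2
    rw [hω, Pi.mul_apply, h2]
    nth_rewrite 1 [show f k ω = f k ω * 1 by ring]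
    exact mul_le_mul_of_nonneg_left (hgmoment1 k) (hfpos k ω).le
  have hsub : Submartingale f G μ := submartingale_nat hadp hfint hcond
  have hnonneg : 0 ≤ f := fun k ω => (hfpos k ω).le
  set ε : NNReal := Real.toNNReal (Real.exp (θ * u)) with hεdef
  have hεcoe : (ε : ℝ) = Real.exp (θ * u) := Real.coe_toNNReal _ (Real.exp_nonneg _)
  have hDoob := maximal_ineq (μ := μ) hsub hnonneg (ε := ε) n
  set Aset := {ω | (ε : ℝ) ≤ (Finset.range (n + 1)).sup' Finset.nonempty_range_add_one
    fun k => f k ω} with hAdef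
  have hsubset : {ω | ∃ s ≤ n, u ≤ ∑ r ∈ Finset.range s, ξ r ω} ⊆ Aset := by
    rintro ω ⟨s, hs, hle⟩
    show (ε : ℝ) ≤ _
    rw [hεcoe]
    calc Real.exp (θ * u) ≤ Real.exp (θ * S s ω) :=
          Real.exp_le_exp.2 (mul_le_mul_of_nonneg_left hle hθ.le)
      _ = f s ω := rfl
      _ ≤ _ := Finset.le_sup' (fun k => f k ω)
          (Finset.mem_range.2 (Nat.lt_succ_of_le hs))
  have hsetint : ∫ ω in Aset, f n ω ∂μ ≤ ∫ ω, f n ω ∂μ :=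
    setIntegral_le_integral (hfint n)
      (Filter.Eventually.of_forall fun ω => (hfpos n ω).le)
  have hend : ∫ ω, f n ω ∂μ ≤ Real.exp (n * (θ ^ 2 / 2)) := by
    calc ∫ ω, f n ω ∂μ ≤ Real.cosh θ ^ n := hfmoment n
      _ ≤ Real.exp (θ ^ 2 / 2) ^ n :=
          pow_le_pow_left₀ (Real.cosh_pos (x := θ)).le (Real.cosh_le_exp_half_sq θ) n
      _ = Real.exp (n * (θ ^ 2 / 2)) := by rw [← Real.exp_nat_mul]
  have hDoob2 : (ε : ENNReal) * μ Aset ≤ ENNReal.ofReal (Real.exp (n * (θ ^ 2 / 2))) := by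
    refine le_trans ?_ (ENNReal.ofReal_le_ofReal (le_trans hsetint hend))
    simpa [ENNReal.smul_def] using hDoob
  have hε0 : (ε : ENNReal) ≠ 0 := by
    simp only [ne_eq, ENNReal.coe_eq_zero]
    rw [hεdef]
    simp [Real.toNNReal_eq_zero, not_le, Real.exp_pos]
  have hεtop : (ε : ENNReal) ≠ ⊤ := ENNReal.coe_ne_top
  have hμA : μ Aset ≤ ENNReal.ofReal (Real.exp (n * (θ ^ 2 / 2))) / ε := by
    rw [ENNReal.le_div_iff_mul_le (Or.inl hε0) (Or.inl hεtop), mul_comm]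
    exact hDoob2
  have hεofReal : (ε : ENNReal) = ENNReal.ofReal (Real.exp (θ * u)) := by
    rw [hεdef]; rfl
  have hdiv : ENNReal.ofReal (Real.exp (n * (θ ^ 2 / 2))) / ε
      = ENNReal.ofReal (Real.exp (-u ^ 2 / (2 * n))) := by
    rw [hεofReal, ← ENNReal.ofReal_div_of_pos (Real.exp_pos _), ← Real.exp_sub]
    congr 1
    rw [hθdef]
    field_simp
    ring
  calc μ {ω | ∃ s ≤ n, u ≤ ∑ r ∈ Finset.range s, ξ r ω} ≤ μ Aset := measure_mono hsubset
    _ ≤ _ := hμA.trans_eq hdiv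

lemma my_twosided (μ : Measure Ω) [IsProbabilityMeasure μ]
    (ξ : ℕ → Ω → ℝ) (hm : ∀ n, Measurable (ξ n))
    (hind : iIndepFun ξ μ)
    (hbd : ∀ n, ∀ᵐ ω ∂μ, |ξ n ω| ≤ 1)
    (hmean : ∀ n, ∫ ω, ξ n ω ∂μ = 0)
    (u : ℝ) (hu : 0 < u) (n : ℕ) (hn : 0 < n) :
    μ {ω | ∃ s ≤ n, u ≤ |∑ r ∈ Finset.range s, ξ r ω|} ≤
      ENNReal.ofReal (2 * Real.exp (-u^2/(2*n))) := by
  set ξ' : ℕ → Ω → ℝ := fun k ω => -(ξ k ω) with hξ'def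
  have hm' : ∀ k, Measurable (ξ' k) := fun k => (hm k).neg
  have hind' : iIndepFun ξ' μ :=
    hind.comp (fun _ => Neg.neg) fun _ => measurable_neg
  have hbd' : ∀ k, ∀ᵐ ω ∂μ, |ξ' k ω| ≤ 1 := by
    intro k; filter_upwards [hbd k] with ω hω; rw [hξ'def]; simpa using hω
  have hmean' : ∀ k, ∫ ω, ξ' k ω ∂μ = 0 := by
    intro k
    rw [hξ'def]
    simp only
    rw [integral_neg, hmean k, neg_zero]
  have h1 := my_onesided μ ξ hm hind hbd hmean u hu n hn
  have h2 := my_onesided μ ξ' hm' hind' hbd' hmean' u hu n hn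
  have hsubset : {ω | ∃ s ≤ n, u ≤ |∑ r ∈ Finset.range s, ξ r ω|} ⊆
      {ω | ∃ s ≤ n, u ≤ ∑ r ∈ Finset.range s, ξ r ω} ∪
      {ω | ∃ s ≤ n, u ≤ ∑ r ∈ Finset.range s, ξ' r ω} := by
    rintro ω ⟨s, hs, habs⟩
    rcases abs_cases (∑ r ∈ Finset.range s, ξ r ω) with ⟨heq, _⟩ | ⟨heq, _⟩
    · exact Or.inl ⟨s, hs, heq ▸ habs⟩
    · refine Or.inr ⟨s, hs, ?_⟩
      rw [heq] at habs
      have : ∑ r ∈ Finset.range s, ξ' r ω = -∑ r ∈ Finset.range s, ξ r ω := by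
        rw [hξ'def, ← Finset.sum_neg_distrib]
      rw [this]
      exact habs
  calc μ _ ≤ μ ({ω | ∃ s ≤ n, u ≤ ∑ r ∈ Finset.range s, ξ r ω} ∪
        {ω | ∃ s ≤ n, u ≤ ∑ r ∈ Finset.range s, ξ' r ω}) := measure_mono hsubset
    _ ≤ _ + _ := measure_union_le _ _
    _ ≤ ENNReal.ofReal (Real.exp (-u^2/(2*n))) + ENNReal.ofReal (Real.exp (-u^2/(2*n))) :=
        add_le_add h1 h2
    _ = ENNReal.ofReal (2 * Real.exp (-u^2/(2*n))) := by
        rw [← ENNReal.ofReal_add (Real.exp_nonneg _) (Real.exp_nonneg _)]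
        congr 1
        ring

/-- For two independent symmetric lazy walks on `ℤ` started at `i` and `j` with
`|i − j| > c₂ λ log λ`, run for `t = ⌊c₁ λ² log λ⌋` steps, the probability that the
3-neighbourhoods of their ranges intersect is at most `C λ^{−α}` with
`α = c₂² / (18 c₁)`, for `λ` large enough. -/
theorem stmt_15 (c₁ c₂ : ℝ) (hc₁ : 0 < c₁) (hc₂ : 0 < c₂) :
    ∃ C > 0, ∃ lam₀ : ℝ, ∀ lam : ℝ, lam₀ ≤ lam →
      ∀ (Ω : Type) [MeasurableSpace Ω] (μ : Measure Ω) [IsProbabilityMeasure μ]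
        (X Y : ℕ → Ω → ℤ),
        (∀ n, Measurable (X n)) → (∀ n, Measurable (Y n)) →
        iIndepFun (Sum.elim X Y) μ →
        (∀ n, ∀ᵐ ω ∂μ, X n ω ∈ ({-1, 0, 1} : Set ℤ)) →
        (∀ n, ∀ᵐ ω ∂μ, Y n ω ∈ ({-1, 0, 1} : Set ℤ)) →
        (∀ n m, IdentDistrib (X n) (X m) μ μ) →
        (∀ n m, IdentDistrib (X n) (Y m) μ μ) →
        (∀ n, IdentDistrib (X n) (fun ω => -(X n ω)) μ μ) →
        ∀ i j : ℤ, c₂ * lam * Real.log lam < |(i : ℝ) - (j : ℝ)| →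
          μ {ω | ∃ s ≤ (⌊c₁ * lam ^ 2 * Real.log lam⌋).toNat,
              ∃ s' ≤ (⌊c₁ * lam ^ 2 * Real.log lam⌋).toNat,
              |(i + ∑ r ∈ Finset.range s, X r ω) -
                (j + ∑ r ∈ Finset.range s', Y r ω)| ≤ 6} ≤
            ENNReal.ofReal (C * lam ^ (-(c₂ ^ 2 / (18 * c₁)))) := by
  refine ⟨4, by norm_num, max (Real.exp 1) (max (18 / c₂) (1 / c₁)), ?_⟩
  intro lam hlam Ω _ μ _ X Y hXm hYm hindXY hXval hYval hXX hXY hXsym i j hij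
  -- basic facts about lam
  have hlam_e : Real.exp 1 ≤ lam := le_trans (le_max_left _ _) hlam
  have hlam_pos : 0 < lam := lt_of_lt_of_le (Real.exp_pos 1) hlam_e
  have hlog1 : 1 ≤ Real.log lam := by
    rw [Real.le_log_iff_exp_le hlam_pos]; exact hlam_e
  have hlog_pos : 0 < Real.log lam := lt_of_lt_of_le one_pos hlog1
  have hlam1 : 1 ≤ lam := le_trans (by
    have := Real.add_one_le_exp 1; linarith) hlam_e
  have hc2lam : 18 ≤ c₂ * lam * Real.log lam := by
    have h1 : 18 / c₂ ≤ lam := le_trans (le_trans (le_max_left _ _) (le_max_right _ _)) hlam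
    have h2 : 18 ≤ c₂ * lam := by
      rw [div_le_iff₀ hc₂] at h1; nlinarith
    nlinarith
  have hc1lam : 1 ≤ c₁ * lam ^ 2 * Real.log lam := by
    have h1 : 1 / c₁ ≤ lam := le_trans (le_trans (le_max_right _ _) (le_max_right _ _)) hlam
    have h2 : 1 ≤ c₁ * lam := by
      rw [div_le_iff₀ hc₁] at h1; nlinarith
    have h3 : 1 ≤ c₁ * lam * lam := by nlinarith
    calc (1:ℝ) = 1 * 1 := by ring
      _ ≤ (c₁ * lam * lam) * Real.log lam :=
          mul_le_mul h3 hlog1 zero_le_one (by nlinarith)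
      _ = c₁ * lam ^ 2 * Real.log lam := by ring
  set t : ℕ := (⌊c₁ * lam ^ 2 * Real.log lam⌋).toNat with htdef
  have hfloor1 : 1 ≤ ⌊c₁ * lam ^ 2 * Real.log lam⌋ := by
    rw [Int.le_floor]; exact_mod_cast hc1lam
  have ht_pos : 0 < t := by
    rw [htdef]; omega
  have htR : (t : ℝ) ≤ c₁ * lam ^ 2 * Real.log lam := by
    rw [htdef]
    have h0 : (0:ℤ) ≤ ⌊c₁ * lam ^ 2 * Real.log lam⌋ := le_trans zero_le_one hfloor1
    have : ((⌊c₁ * lam ^ 2 * Real.log lam⌋.toNat : ℤ) : ℝ)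
        = ((⌊c₁ * lam ^ 2 * Real.log lam⌋ : ℤ) : ℝ) := by
      rw [Int.toNat_of_nonneg h0]
    push_cast at this ⊢
    rw [this]
    exact Int.floor_le _
  have htR_pos : (0:ℝ) < t := by exact_mod_cast ht_pos
  -- geometry
  set D : ℝ := |(i : ℝ) - (j : ℝ)| with hDdef
  have hD : c₂ * lam * Real.log lam < D := hij
  have hD18 : 18 < D := lt_of_le_of_lt hc2lam hD
  set u : ℝ := (D - 6) / 2 with hudef
  have hu : 0 < u := by rw [hudef]; linarith
  have huD : D / 3 ≤ u := by rw [hudef]; linarith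
  -- real-valued increments
  have hcastm : Measurable (fun z : ℤ => (z : ℝ)) := measurable_from_top
  set ξX : ℕ → Ω → ℝ := fun r ω => ((X r ω : ℤ) : ℝ) with hξXdef
  set ξY : ℕ → Ω → ℝ := fun r ω => ((Y r ω : ℤ) : ℝ) with hξYdef
  have hmX : ∀ r, Measurable (ξX r) := fun r => hcastm.comp (hXm r)
  have hmY : ∀ r, Measurable (ξY r) := fun r => hcastm.comp (hYm r)
  have hindX : iIndepFun X μ :=
    my_iIndepFun_comp_of_injective hindXY Sum.inl Sum.inl_injective
  have hindY : iIndepFun Y μ :=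
    my_iIndepFun_comp_of_injective hindXY Sum.inr Sum.inr_injective
  have hindξX : iIndepFun ξX μ :=
    hindX.comp (fun _ => (fun z : ℤ => (z : ℝ))) fun _ => hcastm
  have hindξY : iIndepFun ξY μ :=
    hindY.comp (fun _ => (fun z : ℤ => (z : ℝ))) fun _ => hcastm
  have hbdX : ∀ r, ∀ᵐ ω ∂μ, |ξX r ω| ≤ 1 := by
    intro r
    filter_upwards [hXval r] with ω hω
    simp only [Set.mem_insert_iff, Set.mem_singleton_iff] at hω
    rcases hω with h | h | h <;> simp [hξXdef, h]
  have hbdY : ∀ r, ∀ᵐ ω ∂μ, |ξY r ω| ≤ 1 := by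
    intro r
    filter_upwards [hYval r] with ω hω
    simp only [Set.mem_insert_iff, Set.mem_singleton_iff] at hω
    rcases hω with h | h | h <;> simp [hξYdef, h]
  -- zero means
  have hmeanX : ∀ r, ∫ ω, ξX r ω ∂μ = 0 := by
    intro r
    have hid : IdentDistrib (ξX r) (fun ω => -(ξX r ω)) μ μ := by
      have h := (hXsym r).comp hcastm
      have : (fun z : ℤ => (z:ℝ)) ∘ (fun ω => -(X r ω)) = fun ω => -(ξX r ω) := by
        funext ω; simp [hξXdef]
      rwa [this] at h
    have := hid.integral_eq
    rw [integral_neg] at this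
    linarith
  have hmeanY : ∀ r, ∫ ω, ξY r ω ∂μ = 0 := by
    intro r
    have h := (hXY 0 r).comp hcastm
    have h2 : ∫ ω, ξX 0 ω ∂μ = ∫ ω, ξY r ω ∂μ := h.integral_eq
    rw [← h2]
    exact hmeanX 0
  -- the two tail events
  have hEX := my_twosided μ ξX hmX hindξX hbdX hmeanX u hu t ht_pos
  have hEY := my_twosided μ ξY hmY hindξY hbdY hmeanY u hu t ht_pos
  -- inclusion
  have hsubset : {ω | ∃ s ≤ t, ∃ s' ≤ t,
      |(i + ∑ r ∈ Finset.range s, X r ω) - (j + ∑ r ∈ Finset.range s', Y r ω)| ≤ 6} ⊆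
      {ω | ∃ s ≤ t, u ≤ |∑ r ∈ Finset.range s, ξX r ω|} ∪
      {ω | ∃ s ≤ t, u ≤ |∑ r ∈ Finset.range s, ξY r ω|} := by
    rintro ω ⟨s, hs, s', hs', habs⟩
    rcases le_or_gt u |∑ r ∈ Finset.range s, ξX r ω| with h | h
    · exact Or.inl ⟨s, hs, h⟩
    rcases le_or_gt u |∑ r ∈ Finset.range s', ξY r ω| with h' | h'
    · exact Or.inr ⟨s', hs', h'⟩
    exfalso
    have hA : ∑ r ∈ Finset.range s, ξX r ω = ((∑ r ∈ Finset.range s, X r ω : ℤ) : ℝ) := by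
      push_cast [hξXdef]; rfl
    have hB : ∑ r ∈ Finset.range s', ξY r ω = ((∑ r ∈ Finset.range s', Y r ω : ℤ) : ℝ) := by
      push_cast [hξYdef]; rfl
    have habsR : |((i : ℝ) + ∑ r ∈ Finset.range s, ξX r ω) -
        ((j : ℝ) + ∑ r ∈ Finset.range s', ξY r ω)| ≤ 6 := by
      rw [hA, hB]
      have : (((i + ∑ r ∈ Finset.range s, X r ω) - (j + ∑ r ∈ Finset.range s', Y r ω) : ℤ) : ℝ)
          = ((i : ℝ) + ((∑ r ∈ Finset.range s, X r ω : ℤ) : ℝ)) -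
            ((j : ℝ) + ((∑ r ∈ Finset.range s', Y r ω : ℤ) : ℝ)) := by push_cast; ring
      rw [← this, ← Int.cast_abs]
      exact_mod_cast habs
    have h1 := abs_le.1 habsR
    have h2 := abs_lt.1 h
    have h3 := abs_lt.1 h'
    have hueq : D = 2 * u + 6 := by rw [hudef]; ring
    rcases abs_cases ((i : ℝ) - (j : ℝ)) with ⟨hDeq, _⟩ | ⟨hDeq, _⟩ <;>
      (rw [hDdef, hDeq] at hueq; linarith)
  -- numeric bound
  have hT : (0:ℝ) < c₁ * lam ^ 2 * Real.log lam := by positivity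
  have hnum : Real.exp (-u ^ 2 / (2 * (t : ℝ))) ≤ lam ^ (-(c₂ ^ 2 / (18 * c₁))) := by
    rw [Real.rpow_def_of_pos hlam_pos]
    apply Real.exp_le_exp.2
    have hstep0 : c₂ ^ 2 / (18 * c₁) * Real.log lam
        = (c₂ * lam * Real.log lam / 3) ^ 2 / (2 * (c₁ * lam ^ 2 * Real.log lam)) := by
      field_simp
      ring
    have hu2 : (c₂ * lam * Real.log lam / 3) ^ 2 ≤ u ^ 2 := by
      have h0 : (0:ℝ) ≤ c₂ * lam * Real.log lam / 3 := by positivity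
      have h1 : c₂ * lam * Real.log lam / 3 ≤ u :=
        le_trans (by linarith) huD
      exact pow_le_pow_left₀ h0 h1 2
    have hstep1 : (c₂ * lam * Real.log lam / 3) ^ 2 / (2 * (c₁ * lam ^ 2 * Real.log lam))
        ≤ u ^ 2 / (2 * (c₁ * lam ^ 2 * Real.log lam)) := by
      exact (div_le_div_iff_of_pos_right (by positivity)).2 hu2
    have hstep2 : u ^ 2 / (2 * (c₁ * lam ^ 2 * Real.log lam)) ≤ u ^ 2 / (2 * (t : ℝ)) := by
      apply div_le_div_of_nonneg_left (by positivity) (by positivity) (by linarith)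
    have hchain : c₂ ^ 2 / (18 * c₁) * Real.log lam ≤ u ^ 2 / (2 * (t : ℝ)) := by
      rw [hstep0]; exact le_trans hstep1 hstep2
    rw [neg_div, mul_neg, neg_le_neg_iff, mul_comm]
    exact hchain
  calc μ {ω | ∃ s ≤ t, ∃ s' ≤ t,
        |(i + ∑ r ∈ Finset.range s, X r ω) - (j + ∑ r ∈ Finset.range s', Y r ω)| ≤ 6}
      ≤ μ ({ω | ∃ s ≤ t, u ≤ |∑ r ∈ Finset.range s, ξX r ω|} ∪
          {ω | ∃ s ≤ t, u ≤ |∑ r ∈ Finset.range s, ξY r ω|}) := measure_mono hsubset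
    _ ≤ μ {ω | ∃ s ≤ t, u ≤ |∑ r ∈ Finset.range s, ξX r ω|} +
        μ {ω | ∃ s ≤ t, u ≤ |∑ r ∈ Finset.range s, ξY r ω|} := measure_union_le _ _
    _ ≤ ENNReal.ofReal (2 * Real.exp (-u ^ 2 / (2 * (t:ℝ)))) +
        ENNReal.ofReal (2 * Real.exp (-u ^ 2 / (2 * (t:ℝ)))) := add_le_add hEX hEY
    _ = ENNReal.ofReal (4 * Real.exp (-u ^ 2 / (2 * (t:ℝ)))) := by
        rw [← ENNReal.ofReal_add (by positivity) (by positivity)]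
        congr 1
        ring
    _ ≤ ENNReal.ofReal (4 * lam ^ (-(c₂ ^ 2 / (18 * c₁)))) := by
        apply ENNReal.ofReal_le_ofReal
        nlinarith [hnum, Real.exp_pos (-u ^ 2 / (2 * (t:ℝ)))]
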